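/- Let μ > 1, 0 < ν < 1. Let t > 0 and D₁, D₂, B ≥ 0 with D₁, D₂ ≤ t·(1/ν + 1/(μν)) and B ≥ t, and ρ_B = 1 + 1/(μν) < 2. Then (2D₁ + 2D₂ + ρ_B·B)/(D₁ + D₂ + B) ≤ (4 + 5/μ + ν)/(2 + 2/μ + ν). -/

import Mathlib

theorem two_red_one_blue_group_ratio
    (μ ν : ℝ) (hμ : 1 < μ) (hν0 : 0 < ν) (hν1 : ν < 1)
    (t D₁ D₂ B : ℝ) (ht : 0 < t)
    (hD₁0 : 0 ≤ D₁) (hD₂0 : 0 ≤ D₂) (hB0 : 0 ≤ B)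
    (hD₁ : D₁ ≤ t * (1 / ν + 1 / (μ * ν)))
    (hD₂ : D₂ ≤ t * (1 / ν + 1 / (μ * ν)))
    (hB : B ≥ t)
    (hρB : 1 + 1 / (μ * ν) < 2) :
    (2 * D₁ + 2 * D₂ + (1 + 1 / (μ * ν)) * B) / (D₁ + D₂ + B)
      ≤ (4 + 5 / μ + ν) / (2 + 2 / μ + ν) := by
  have hμ0 : (0:ℝ) < μ := by linarith
  have hμν : (0:ℝ) < μ * ν := by positivity
  have hμν1 : 1 < μ * ν := by
    by_contra h
    push_neg at h
    have : 1 ≤ 1 / (μ * ν) := by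
      rw [le_div_iff₀ hμν]; linarith
    linarith
  have hS : (D₁ + D₂) * (μ * ν) ≤ 2 * t * (μ + 1) := by
    have key : (1 / ν + 1 / (μ * ν)) * (μ * ν) = μ + 1 := by
      field_simp
    have := mul_le_mul_of_nonneg_right (add_le_add hD₁ hD₂) hμν.le
    calc (D₁ + D₂) * (μ * ν) ≤ (t * (1/ν + 1/(μ*ν)) + t * (1/ν + 1/(μ*ν))) * (μ*ν) := this
      _ = 2 * t * ((1/ν + 1/(μ*ν)) * (μ*ν)) := by ring
      _ = 2 * t * (μ + 1) := by rw [key]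
  have hden : 0 < D₁ + D₂ + B := by linarith
  have hden2 : 0 < 2 + 2 / μ + ν := by positivity
  rw [div_le_div_iff₀ hden hden2]
  have hmm : (0:ℝ) < μ^2 * ν := by positivity
  have key : (2*(D₁+D₂)*(μ*ν) + B*(μ*ν) + B) * (2*μ + 2 + μ*ν)
      ≤ (4*μ + 5 + μ*ν) * ((D₁ + D₂ + B) * (μ*ν)) := by
    nlinarith [mul_le_mul_of_nonneg_right hB (by nlinarith : (0:ℝ) ≤ 2*(μ*ν-1)*(μ+1)),
      mul_le_mul_of_nonneg_left hS (by nlinarith : (0:ℝ) ≤ μ*ν - 1)]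
  have e1 : (2 * D₁ + 2 * D₂ + (1 + 1 / (μ * ν)) * B) * (2 + 2 / μ + ν) * (μ^2 * ν)
      = (2*(D₁+D₂)*(μ*ν) + B*(μ*ν) + B) * (2*μ + 2 + μ*ν) := by
    field_simp
    ring
  have e2 : (4 + 5 / μ + ν) * (D₁ + D₂ + B) * (μ^2 * ν)
      = (4*μ + 5 + μ*ν) * ((D₁ + D₂ + B) * (μ*ν)) := by
    field_simp
  have key2 : (2 * D₁ + 2 * D₂ + (1 + 1 / (μ * ν)) * B) * (2 + 2 / μ + ν) * (μ^2 * ν)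
      ≤ (4 + 5 / μ + ν) * (D₁ + D₂ + B) * (μ^2 * ν) := by
    rw [e1, e2]; exact key
  exact le_of_mul_le_mul_right key2 hmm
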